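/- One-step near-optimality bound: with the Curious Explorer iterates, poorly visited sets K_n, and intrinsic rewards r_n, fix n ≥ 0 and ε_n ≥ 0, and assume the ε_n-optimality condition sup_{π∈Π} V_{π,r_n}(μ_n) ≤ V_{π_{n+1},r_n}(μ_n) + ε_n. Then (1/2) · sup_{π∈Π} Σ_{s∈K_n} d_{δ_{s₀}}^π(s) ≤ Σ_{s∈K_n} d_{μ_n}^{π_{n+1}}(s) + ε_n. -/
import Mathlib


open Finset

variable {S A : Type*} [Fintype S] [Fintype A] [Nonempty S] [Nonempty A] [DecidableEq S]

/-- `ρ` is a probability distribution on the finite type `S`. -/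
def IsDist {S : Type*} [Fintype S] (ρ : S → ℝ) : Prop :=
  (∀ s, 0 ≤ ρ s) ∧ ∑ s, ρ s = 1

/-- `π` is a stationary policy: a probability distribution over actions at each state. -/
def IsPolicy (π : S → A → ℝ) : Prop := ∀ s, IsDist (π s)

/-- `P` is a transition kernel: `P s a` is a distribution on next states. -/
def IsKernel (P : S → A → S → ℝ) : Prop := ∀ s a, IsDist (P s a)

/-- The induced state-transition kernel `K_π(s'|s) = Σ_a π(a|s) P(s'|s,a)`. -/
def kpol (P : S → A → S → ℝ) (π : S → A → ℝ) (s s' : S) : ℝ :=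
  ∑ a, π s a * P s a s'

/-- One step of the Markov chain with kernel `K_π`: `ρ ↦ ρ K_π`. -/
def step (P : S → A → S → ℝ) (π : S → A → ℝ) (ρ : S → ℝ) : S → ℝ :=
  fun s' => ∑ s, ρ s * kpol P π s s'

/-- `ρ K_π^t`: the state distribution after `t` steps started from `ρ`. -/
def iterDist (P : S → A → S → ℝ) (π : S → A → ℝ) (ρ : S → ℝ) (t : ℕ) : S → ℝ :=
  (step P π)^[t] ρ

/-- The discounted state visitation distribution
`d_ρ^π(s) = (1-γ) Σ_t γ^t (ρ K_π^t)(s)`. -/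
noncomputable def dvisit (P : S → A → S → ℝ) (γ : ℝ) (π : S → A → ℝ)
    (ρ : S → ℝ) (s : S) : ℝ :=
  (1 - γ) * ∑' t : ℕ, γ ^ t * iterDist P π ρ t s

/-- The normalized value function
`V_{π,r}(ρ) = (1-γ) Σ_t γ^t Σ_{s,a} (ρ K_π^t)(s) π(a|s) r(s,a)`. -/
noncomputable def value (P : S → A → S → ℝ) (γ : ℝ) (π : S → A → ℝ)
    (r : S → A → ℝ) (ρ : S → ℝ) : ℝ :=
  (1 - γ) * ∑' t : ℕ, γ ^ t * ∑ s, ∑ a, iterDist P π ρ t s * π s a * r s a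

/-- The Dirac distribution at `s₀`. -/
def dirac (s₀ : S) : S → ℝ := fun s => if s = s₀ then 1 else 0

/-- Curious Explorer reset models: `ceMu P γ πseq s₀ 0 = μ₋₁ = δ_{s₀}` and,
for `n ≥ 0`, `ceMu P γ πseq s₀ (n+1) = μ_n = ½ D_n + ½ δ_{s₀}` where
`D_n = d_{μ_{n-1}}^{π_n}`. -/
noncomputable def ceMu (P : S → A → S → ℝ) (γ : ℝ) (πseq : ℕ → S → A → ℝ)
    (s₀ : S) : ℕ → S → ℝ
  | 0 => dirac s₀
  | n + 1 => fun s =>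
      (1 / 2) * dvisit P γ (πseq n) (ceMu P γ πseq s₀ n) s + (1 / 2) * dirac s₀ s

/-- `D_n = d_{μ_{n-1}}^{π_n}`. -/
noncomputable def ceD (P : S → A → S → ℝ) (γ : ℝ) (πseq : ℕ → S → A → ℝ)
    (s₀ : S) (n : ℕ) : S → ℝ :=
  dvisit P γ (πseq n) (ceMu P γ πseq s₀ n)

open scoped Classical in
/-- The set of poorly visited states `K_n = { s : Σ_{i=0}^n D_i(s) ≤ β_n }`. -/
noncomputable def ceK (P : S → A → S → ℝ) (γ : ℝ) (πseq : ℕ → S → A → ℝ)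
    (s₀ : S) (β : ℕ → ℝ) (n : ℕ) : Finset S :=
  Finset.univ.filter fun s => ∑ i ∈ Finset.range (n + 1), ceD P γ πseq s₀ i s ≤ β n

/-- The intrinsic reward `r_n(s,a) = 1_{s ∈ K_n}`. -/
noncomputable def ceR (P : S → A → S → ℝ) (γ : ℝ) (πseq : ℕ → S → A → ℝ)
    (s₀ : S) (β : ℕ → ℝ) (n : ℕ) (s : S) (_a : A) : ℝ :=
  if s ∈ ceK P γ πseq s₀ β n then 1 else 0

open scoped Classical in
/-- `β̃(s) = β_{ñ(s)}` where `ñ(s) = max { n ≤ N : s ∈ K_n }` if `s` lies in some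
`K_n` with `n ≤ N`, and `β̃(s) = 0` otherwise. -/
noncomputable def ceBetaTilde (P : S → A → S → ℝ) (γ : ℝ) (πseq : ℕ → S → A → ℝ)
    (s₀ : S) (β : ℕ → ℝ) (N : ℕ) (s : S) : ℝ :=
  if ∃ n ≤ N, s ∈ ceK P γ πseq s₀ β n then
    β (Nat.findGreatest (fun n => s ∈ ceK P γ πseq s₀ β n) N)
  else 0

set_option linter.unusedSectionVars false

lemma isDist_step {P : S → A → S → ℝ} (hP : IsKernel P) {π : S → A → ℝ}
    (hπ : IsPolicy π) {ρ : S → ℝ} (hρ : IsDist ρ) : IsDist (step P π ρ) := by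
  constructor
  · intro s'
    refine Finset.sum_nonneg fun s _ => mul_nonneg (hρ.1 s) ?_
    exact Finset.sum_nonneg fun a _ => mul_nonneg ((hπ s).1 a) ((hP s a).1 s')
  · show ∑ s' : S, ∑ s, ρ s * kpol P π s s' = 1
    rw [Finset.sum_comm]
    have h1 : ∀ s : S, ∑ s', kpol P π s s' = 1 := by
      intro s
      unfold kpol
      rw [Finset.sum_comm]
      have : ∀ a : A, ∑ s', π s a * P s a s' = π s a := by
        intro a; rw [← Finset.mul_sum, (hP s a).2, mul_one]
      rw [Finset.sum_congr rfl fun a _ => this a, (hπ s).2]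
    calc ∑ s, ∑ s', ρ s * kpol P π s s' = ∑ s, ρ s := by
          refine Finset.sum_congr rfl fun s _ => ?_
          rw [← Finset.mul_sum, h1 s, mul_one]
      _ = 1 := hρ.2

lemma isDist_iterDist {P : S → A → S → ℝ} (hP : IsKernel P) {π : S → A → ℝ}
    (hπ : IsPolicy π) {ρ : S → ℝ} (hρ : IsDist ρ) (t : ℕ) :
    IsDist (iterDist P π ρ t) := by
  induction t with
  | zero => exact hρ
  | succ t ih =>
    have : iterDist P π ρ (t + 1) = step P π (iterDist P π ρ t) :=
      Function.iterate_succ_apply' _ _ _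
    rw [this]; exact isDist_step hP hπ ih

lemma iterDist_le_one {P : S → A → S → ℝ} (hP : IsKernel P) {π : S → A → ℝ}
    (hπ : IsPolicy π) {ρ : S → ℝ} (hρ : IsDist ρ) (t : ℕ) (s : S) :
    iterDist P π ρ t s ≤ 1 := by
  have h := isDist_iterDist hP hπ hρ t
  calc iterDist P π ρ t s ≤ ∑ s', iterDist P π ρ t s' :=
        Finset.single_le_sum (fun s' _ => h.1 s') (Finset.mem_univ s)
    _ = 1 := h.2

lemma summable_iter {P : S → A → S → ℝ} {γ : ℝ} (hγ0 : 0 ≤ γ) (hγ1 : γ < 1)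
    (hP : IsKernel P) {π : S → A → ℝ} (hπ : IsPolicy π) {ρ : S → ℝ}
    (hρ : IsDist ρ) (s : S) :
    Summable (fun t : ℕ => γ ^ t * iterDist P π ρ t s) := by
  refine Summable.of_nonneg_of_le
    (fun t => mul_nonneg (pow_nonneg hγ0 t) ((isDist_iterDist hP hπ hρ t).1 s))
    (fun t => ?_) (summable_geometric_of_lt_one hγ0 hγ1)
  calc γ ^ t * iterDist P π ρ t s ≤ γ ^ t * 1 :=
        mul_le_mul_of_nonneg_left (iterDist_le_one hP hπ hρ t s) (pow_nonneg hγ0 t)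
    _ = γ ^ t := mul_one _

lemma sum_dvisit_eq {P : S → A → S → ℝ} {γ : ℝ} (hγ0 : 0 ≤ γ) (hγ1 : γ < 1)
    (hP : IsKernel P) {π : S → A → ℝ} (hπ : IsPolicy π) {ρ : S → ℝ}
    (hρ : IsDist ρ) (F : Finset S) :
    ∑ s ∈ F, dvisit P γ π ρ s
      = (1 - γ) * ∑' t : ℕ, γ ^ t * ∑ s ∈ F, iterDist P π ρ t s := by
  unfold dvisit
  rw [← Finset.mul_sum, ← Summable.tsum_finsetSum (fun s _ => summable_iter hγ0 hγ1 hP hπ hρ s)]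
  congr 1
  refine tsum_congr fun t => ?_
  rw [Finset.mul_sum]

lemma isDist_dvisit {P : S → A → S → ℝ} {γ : ℝ} (hγ0 : 0 ≤ γ) (hγ1 : γ < 1)
    (hP : IsKernel P) {π : S → A → ℝ} (hπ : IsPolicy π) {ρ : S → ℝ}
    (hρ : IsDist ρ) : IsDist (dvisit P γ π ρ) := by
  constructor
  · intro s
    exact mul_nonneg (by linarith) (tsum_nonneg fun t =>
      mul_nonneg (pow_nonneg hγ0 t) ((isDist_iterDist hP hπ hρ t).1 s))
  · rw [sum_dvisit_eq hγ0 hγ1 hP hπ hρ]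
    have : ∀ t : ℕ, γ ^ t * ∑ s, iterDist P π ρ t s = γ ^ t := by
      intro t; rw [(isDist_iterDist hP hπ hρ t).2, mul_one]
    rw [tsum_congr this, tsum_geometric_of_lt_one hγ0 hγ1]
    exact mul_inv_cancel₀ (by linarith)

lemma sum_dvisit_le_one {P : S → A → S → ℝ} {γ : ℝ} (hγ0 : 0 ≤ γ) (hγ1 : γ < 1)
    (hP : IsKernel P) {π : S → A → ℝ} (hπ : IsPolicy π) {ρ : S → ℝ}
    (hρ : IsDist ρ) (F : Finset S) :
    ∑ s ∈ F, dvisit P γ π ρ s ≤ 1 := by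
  have h := isDist_dvisit hγ0 hγ1 hP hπ hρ
  calc ∑ s ∈ F, dvisit P γ π ρ s ≤ ∑ s, dvisit P γ π ρ s :=
        Finset.sum_le_sum_of_subset_of_nonneg (Finset.subset_univ F)
          (fun s _ _ => h.1 s)
    _ = 1 := h.2

lemma step_linear (P : S → A → S → ℝ) (π : S → A → ℝ) (ρ₁ ρ₂ : S → ℝ) (a b : ℝ) :
    step P π (fun x => a * ρ₁ x + b * ρ₂ x)
      = fun s' => a * step P π ρ₁ s' + b * step P π ρ₂ s' := by
  funext s'; unfold step
  rw [Finset.mul_sum, Finset.mul_sum, ← Finset.sum_add_distrib]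
  exact Finset.sum_congr rfl fun s _ => by ring

lemma iterDist_linear (P : S → A → S → ℝ) (π : S → A → ℝ) (ρ₁ ρ₂ : S → ℝ)
    (a b : ℝ) (t : ℕ) :
    iterDist P π (fun x => a * ρ₁ x + b * ρ₂ x) t
      = fun s => a * iterDist P π ρ₁ t s + b * iterDist P π ρ₂ t s := by
  induction t with
  | zero => rfl
  | succ t ih =>
    have h1 : ∀ ρ : S → ℝ, iterDist P π ρ (t + 1) = step P π (iterDist P π ρ t) :=
      fun ρ => Function.iterate_succ_apply' _ _ _
    rw [h1, ih, step_linear, h1, h1]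

lemma dvisit_linear {P : S → A → S → ℝ} {γ : ℝ} (hγ0 : 0 ≤ γ) (hγ1 : γ < 1)
    (hP : IsKernel P) {π : S → A → ℝ} (hπ : IsPolicy π) {ρ₁ ρ₂ : S → ℝ}
    (h1 : IsDist ρ₁) (h2 : IsDist ρ₂) (a b : ℝ) (s : S) :
    dvisit P γ π (fun x => a * ρ₁ x + b * ρ₂ x) s
      = a * dvisit P γ π ρ₁ s + b * dvisit P γ π ρ₂ s := by
  unfold dvisit
  have e : ∀ t : ℕ, γ ^ t * iterDist P π (fun x => a * ρ₁ x + b * ρ₂ x) t s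
      = a * (γ ^ t * iterDist P π ρ₁ t s) + b * (γ ^ t * iterDist P π ρ₂ t s) := by
    intro t; rw [iterDist_linear]; ring
  rw [tsum_congr e, Summable.tsum_add ((summable_iter hγ0 hγ1 hP hπ h1 s).mul_left a)
    ((summable_iter hγ0 hγ1 hP hπ h2 s).mul_left b), tsum_mul_left, tsum_mul_left]
  ring

lemma value_indicator {P : S → A → S → ℝ} {γ : ℝ} (hγ0 : 0 ≤ γ) (hγ1 : γ < 1)
    (hP : IsKernel P) {π : S → A → ℝ} (hπ : IsPolicy π) {ρ : S → ℝ}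
    (hρ : IsDist ρ) (K : Finset S) (r : S → A → ℝ)
    (hr : ∀ s a, r s a = if s ∈ K then 1 else 0) :
    value P γ π r ρ = ∑ s ∈ K, dvisit P γ π ρ s := by
  rw [sum_dvisit_eq hγ0 hγ1 hP hπ hρ]
  unfold value
  congr 1
  refine tsum_congr fun t => ?_
  congr 1
  have h : ∀ s : S, ∑ a, iterDist P π ρ t s * π s a * r s a
      = if s ∈ K then iterDist P π ρ t s else 0 := by
    intro s
    simp only [hr]
    by_cases hs : s ∈ K
    · simp only [hs, if_true, mul_one, ← Finset.mul_sum, (hπ s).2]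
    · simp [hs]
  rw [Finset.sum_congr rfl fun s _ => h s, Finset.sum_ite_mem, Finset.univ_inter]

lemma isDist_dirac (s₀ : S) : IsDist (dirac s₀ : S → ℝ) := by
  constructor
  · intro s; unfold dirac; positivity
  · simp [dirac]

lemma nonempty_policy : Nonempty {π' : S → A → ℝ // IsPolicy π'} :=
  ⟨⟨fun _ _ => (Fintype.card A : ℝ)⁻¹, fun s => ⟨fun a => by positivity, by
    rw [Finset.sum_const, Finset.card_univ, nsmul_eq_mul,
      mul_inv_cancel₀ (Nat.cast_ne_zero.mpr Fintype.card_ne_zero)]⟩⟩⟩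

lemma isDist_ceMu {P : S → A → S → ℝ} {γ : ℝ} (hγ0 : 0 ≤ γ) (hγ1 : γ < 1)
    (hP : IsKernel P) (πseq : ℕ → S → A → ℝ) (hπseq : ∀ k, IsPolicy (πseq k))
    (s₀ : S) : ∀ m, IsDist (ceMu P γ πseq s₀ m) := by
  intro m
  induction m with
  | zero => exact isDist_dirac s₀
  | succ k ih =>
    have hD : IsDist (dvisit P γ (πseq k) (ceMu P γ πseq s₀ k)) :=
      isDist_dvisit hγ0 hγ1 hP (hπseq k) ih
    constructor
    · intro s
      exact add_nonneg (mul_nonneg (by norm_num) (hD.1 s))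
        (mul_nonneg (by norm_num) ((isDist_dirac s₀).1 s))
    · have h : ∑ s, ceMu P γ πseq s₀ (k + 1) s
          = (1/2) * ∑ s, dvisit P γ (πseq k) (ceMu P γ πseq s₀ k) s
            + (1/2) * ∑ s, dirac s₀ s := by
        simp [ceMu, Finset.sum_add_distrib, Finset.mul_sum]
      rw [h, hD.2, (isDist_dirac s₀).2]; norm_num

/-- one-step near-optimality bound: if `π_{n+1}` is `ε_n`-optimal
for the intrinsic reward `r_n` with starting distribution `μ_n`, then
`½ sup_{π∈Π} Σ_{s∈K_n} d_{δ_{s₀}}^π(s) ≤ Σ_{s∈K_n} d_{μ_n}^{π_{n+1}}(s) + ε_n`. -/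
theorem stmt10_ce_one_step
    (P : S → A → S → ℝ) (γ : ℝ) (hP : IsKernel P) (hγ0 : 0 ≤ γ) (hγ1 : γ < 1)
    (s₀ : S) (πseq : ℕ → S → A → ℝ) (hπseq : ∀ k, IsPolicy (πseq k))
    (β : ℕ → ℝ) (hβ : ∀ n, 0 ≤ β n) (n : ℕ) (εn : ℝ) (hεn : 0 ≤ εn)
    (hopt : (⨆ π : {π' : S → A → ℝ // IsPolicy π'},
        value P γ π.1 (ceR P γ πseq s₀ β n) (ceMu P γ πseq s₀ (n + 1))) ≤
      value P γ (πseq (n + 1)) (ceR P γ πseq s₀ β n) (ceMu P γ πseq s₀ (n + 1)) + εn) :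
    (1 / 2) * (⨆ π : {π' : S → A → ℝ // IsPolicy π'},
        ∑ s ∈ ceK P γ πseq s₀ β n, dvisit P γ π.1 (dirac s₀) s) ≤
      (∑ s ∈ ceK P γ πseq s₀ β n,
        dvisit P γ (πseq (n + 1)) (ceMu P γ πseq s₀ (n + 1)) s) + εn := by
  have hμn : IsDist (ceMu P γ πseq s₀ n) := isDist_ceMu hγ0 hγ1 hP πseq hπseq s₀ n
  have hμ : IsDist (ceMu P γ πseq s₀ (n + 1)) := isDist_ceMu hγ0 hγ1 hP πseq hπseq s₀ (n + 1)
  have hD : IsDist (dvisit P γ (πseq n) (ceMu P γ πseq s₀ n)) :=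
    isDist_dvisit hγ0 hγ1 hP (hπseq n) hμn
  have hδ : IsDist (dirac s₀ : S → ℝ) := isDist_dirac s₀
  set K := ceK P γ πseq s₀ β n with hKdef
  have hr : ∀ (s : S) (a : A), ceR P γ πseq s₀ β n s a = if s ∈ K then 1 else 0 := by
    intro s a
    by_cases h : s ∈ K
    · simp [ceR, hKdef ▸ h, h]
    · simp [ceR, hKdef ▸ h, h]
  have hval : ∀ (π' : S → A → ℝ), IsPolicy π' →
      value P γ π' (ceR P γ πseq s₀ β n) (ceMu P γ πseq s₀ (n + 1))
        = ∑ s ∈ K, dvisit P γ π' (ceMu P γ πseq s₀ (n + 1)) s :=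
    fun π' hπ' => value_indicator hγ0 hγ1 hP hπ' hμ K _ hr
  have hmu_eq : ceMu P γ πseq s₀ (n + 1)
      = fun x => (1/2) * dvisit P γ (πseq n) (ceMu P γ πseq s₀ n) x
        + (1/2) * dirac s₀ x := rfl
  have hsplit : ∀ (π' : S → A → ℝ), IsPolicy π' →
      ∑ s ∈ K, dvisit P γ π' (ceMu P γ πseq s₀ (n + 1)) s
        = (1/2) * ∑ s ∈ K, dvisit P γ π' (dvisit P γ (πseq n) (ceMu P γ πseq s₀ n)) s
          + (1/2) * ∑ s ∈ K, dvisit P γ π' (dirac s₀) s := by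
    intro π' hπ'
    rw [Finset.mul_sum, Finset.mul_sum, ← Finset.sum_add_distrib]
    refine Finset.sum_congr rfl fun s _ => ?_
    rw [hmu_eq]
    exact dvisit_linear hγ0 hγ1 hP hπ' hD hδ _ _ s
  have hbdd : BddAbove (Set.range fun π : {π' : S → A → ℝ // IsPolicy π'} =>
      value P γ π.1 (ceR P γ πseq s₀ β n) (ceMu P γ πseq s₀ (n + 1))) := by
    refine ⟨1, ?_⟩
    rintro x ⟨π, rfl⟩
    dsimp only
    rw [hval π.1 π.2]
    exact sum_dvisit_le_one hγ0 hγ1 hP π.2 hμ K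
  have hne : Nonempty {π' : S → A → ℝ // IsPolicy π'} := nonempty_policy
  set C := (∑ s ∈ K, dvisit P γ (πseq (n + 1)) (ceMu P γ πseq s₀ (n + 1)) s) + εn with hCdef
  rw [hval (πseq (n + 1)) (hπseq (n + 1))] at hopt
  have key : ∀ π : {π' : S → A → ℝ // IsPolicy π'},
      ∑ s ∈ K, dvisit P γ π.1 (dirac s₀) s ≤ 2 * C := by
    intro π
    have h1 : (1/2) * ∑ s ∈ K, dvisit P γ π.1 (dirac s₀) s
        ≤ ∑ s ∈ K, dvisit P γ π.1 (ceMu P γ πseq s₀ (n + 1)) s := by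
      rw [hsplit π.1 π.2]
      have h0 : 0 ≤ ∑ s ∈ K, dvisit P γ π.1 (dvisit P γ (πseq n) (ceMu P γ πseq s₀ n)) s :=
        Finset.sum_nonneg fun s _ => (isDist_dvisit hγ0 hγ1 hP π.2 hD).1 s
      linarith
    have h2 : value P γ π.1 (ceR P γ πseq s₀ β n) (ceMu P γ πseq s₀ (n + 1))
        ≤ ⨆ π : {π' : S → A → ℝ // IsPolicy π'},
          value P γ π.1 (ceR P γ πseq s₀ β n) (ceMu P γ πseq s₀ (n + 1)) :=
      le_ciSup hbdd π
    rw [hval π.1 π.2] at h2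
    simp only [hCdef]
    linarith
  have hsup : (⨆ π : {π' : S → A → ℝ // IsPolicy π'},
      ∑ s ∈ K, dvisit P γ π.1 (dirac s₀) s) ≤ 2 * C := ciSup_le key
  linarith
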